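/- The equation m·sin(2√E) + √E·cos(2√E) = 0 has exactly one root E lying in the interval [π²/16, π²/4) for every m ≥ 0; this root is denoted E₁(m). -/

import Mathlib

open Real

/-- For every `m ≥ 0`, the equation `m·sin(2√E) + √E·cos(2√E) = 0` has exactly one
root `E` lying in the interval `[π²/16, π²/4)`. -/
theorem unique_root_E1 (m : ℝ) (hm : 0 ≤ m) :
    ∃! E : ℝ, E ∈ Set.Ico (π^2 / 16) (π^2 / 4) ∧
      m * Real.sin (2 * Real.sqrt E) + Real.sqrt E * Real.cos (2 * Real.sqrt E) = 0 := by
  have hπ := Real.pi_pos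
  set f : ℝ → ℝ := fun t => m * Real.sin t + t / 2 * Real.cos t with hf
  have hcont : Continuous f := by fun_prop
  have hder : ∀ t : ℝ, HasDerivAt f ((m + 1/2) * Real.cos t - t/2 * Real.sin t) t := by
    intro t
    have h1 : HasDerivAt (fun t => m * Real.sin t) (m * Real.cos t) t :=
      (Real.hasDerivAt_sin t).const_mul m
    have h2 : HasDerivAt (fun t : ℝ => t / 2) (1/2) t := (hasDerivAt_id t).div_const 2
    have h3 := h2.mul (Real.hasDerivAt_cos t)
    exact (h1.add h3).congr_deriv (by ring)
  have hanti : StrictAntiOn f (Set.Icc (π/2) π) := by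
    apply strictAntiOn_of_deriv_neg (convex_Icc _ _) hcont.continuousOn
    intro t ht
    rw [interior_Icc] at ht
    rw [(hder t).deriv]
    have hc : Real.cos t < 0 := Real.cos_neg_of_pi_div_two_lt_of_lt ht.1 (by linarith [ht.2])
    have hs : 0 < Real.sin t := Real.sin_pos_of_pos_of_lt_pi (by linarith [ht.1]) ht.2
    have h1 : (m + 1/2) * Real.cos t < 0 :=
      mul_neg_of_pos_of_neg (by linarith) hc
    have h2 : 0 < t/2 * Real.sin t := mul_pos (by linarith [ht.1]) hs
    linarith
  have hfa : f (π/2) = m := by simp [hf]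
  have hfb : f π = -(π/2) := by simp [hf]
  have hmem0 : (0:ℝ) ∈ Set.Icc (f π) (f (π/2)) := by
    rw [hfa, hfb]; constructor <;> linarith
  obtain ⟨t, htmem, htroot⟩ :=
    intermediate_value_Icc' (by linarith : π/2 ≤ π) hcont.continuousOn hmem0
  have ht1 : π/2 ≤ t := htmem.1
  have htlt : t < π := by
    rcases lt_or_eq_of_le htmem.2 with h | h
    · exact h
    · exfalso; rw [h, hfb] at htroot; linarith
  have ht0 : 0 < t := by linarith
  have hsq : Real.sqrt (t^2/4) = t/2 := by
    rw [show t^2/4 = (t/2)^2 by ring, Real.sqrt_sq (by linarith)]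
  refine ⟨t^2/4, ⟨⟨by nlinarith, by nlinarith⟩, ?_⟩, ?_⟩
  · rw [hsq, show 2 * (t/2) = t by ring]
    simpa [hf] using htroot
  · rintro E ⟨⟨hE1, hE2⟩, heq⟩
    have hE0 : 0 ≤ E := le_trans (by positivity) hE1
    set s := Real.sqrt E with hsdef
    have hs2 : s^2 = E := Real.sq_sqrt hE0
    have hs0 : 0 ≤ s := Real.sqrt_nonneg E
    have hlo : π/2 ≤ 2*s := by nlinarith
    have hhi : 2*s < π := by nlinarith
    have hroot2 : f (2*s) = 0 := by
      simp only [hf]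
      rw [show 2*s/2 = s by ring]
      exact heq
    have hts : 2*s = t := by
      apply hanti.injOn ⟨hlo, by linarith⟩ ⟨ht1, le_of_lt htlt⟩
      rw [hroot2, htroot]
    nlinarith
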